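/- arXiv:1307.0329 — 2 statements merged into one kernel-verified Lean document; each statement's English description precedes it below -/
import Mathlib

section
/- For fixed v with |v| < 1 and α_j = 1 - 1/j², the partial products G_N(v) = ∏_{j=1}^N (1 - v·α_j) satisfy G_N(v) = (1-v)^N · (sinh(π√(v/(1-v))) / (π√(v/(1-v)))) · (1 + O(1/N)) as N → ∞; in particular, G_N(v)/(1-v)^N converges to sinh(π√(v/(1-v)))/(π√(v/(1-v))). -/
open Filter Real Finset

lemma euler_sinh (s : ℝ) (hs : 0 < s) :
    Tendsto (fun n : ℕ => ∏ j ∈ Finset.range n, ((1:ℝ) + s^2 / ((j:ℝ)+1)^2)) atTop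
      (nhds (Real.sinh (π * s) / (π * s))) := by
  have hz : (π * ((s:ℂ) * Complex.I)) ≠ 0 := by
    apply mul_ne_zero; · exact_mod_cast Real.pi_ne_zero
    exact mul_ne_zero (by exact_mod_cast hs.ne') Complex.I_ne_zero
  have h := (Complex.tendsto_euler_sin_prod ((s:ℂ) * Complex.I)).const_mul
      (π * ((s:ℂ) * Complex.I))⁻¹
  have heq : ∀ n : ℕ, (π * ((s:ℂ) * Complex.I))⁻¹ *
      (π * ((s:ℂ) * Complex.I) * ∏ j ∈ Finset.range n,
        ((1:ℂ) - ((s:ℂ) * Complex.I) ^ 2 / ((j:ℂ) + 1) ^ 2)) =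
      ((∏ j ∈ Finset.range n, ((1:ℝ) + s^2 / ((j:ℝ)+1)^2) : ℝ) : ℂ) := by
    intro n
    rw [inv_mul_cancel_left₀ hz]
    push_cast
    apply Finset.prod_congr rfl
    intro j _
    rw [mul_pow, Complex.I_sq]
    ring
  simp_rw [heq] at h
  rw [← tendsto_ofReal_iff (x := Real.sinh (π * s) / (π * s))]
  convert h using 2
  rw [show (π : ℂ) * ((s:ℂ) * Complex.I) = ((π * s : ℝ) : ℂ) * Complex.I by push_cast; ring,
    Complex.sin_mul_I, ← Complex.ofReal_sinh]
  rw [eq_inv_mul_iff_mul_eq₀]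
  · have hπ : (π:ℂ) ≠ 0 := by exact_mod_cast Real.pi_ne_zero
    have hsc : (s:ℂ) ≠ 0 := by exact_mod_cast hs.ne'
    push_cast
    field_simp
  · rwa [show (π : ℂ) * ((s:ℂ) * Complex.I) = ((π * s : ℝ) : ℂ) * Complex.I by push_cast; ring] at hz

/-- **Example 1 (Böttcher).** For `0 < v < 1` and `α_j = 1 - 1/j²`, the partial products
`G_N(v) = ∏_{j=1}^N (1 - v α_j)` satisfy
`G_N(v) = (1-v)^N · (sinh(π√(v/(1-v)))/(π√(v/(1-v)))) · (1 + O(1/N))`;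
in particular `G_N(v)/(1-v)^N` converges to `sinh(π√(v/(1-v)))/(π√(v/(1-v)))`. -/
theorem stmt0 (v : ℝ) (hv0 : 0 < v) (hv1 : v < 1)
    (α : ℕ → ℝ) (hα : ∀ j : ℕ, 1 ≤ j → α j = 1 - 1 / (j : ℝ) ^ 2)
    (G : ℕ → ℝ) (hG : ∀ N, G N = ∏ j ∈ Finset.Icc 1 N, (1 - v * α j)) :
    (∃ C : ℝ, ∃ ε : ℕ → ℝ, (∀ N : ℕ, 1 ≤ N → |ε N| ≤ C / N) ∧
      ∀ N : ℕ, 1 ≤ N → G N = (1 - v) ^ N *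
        (Real.sinh (π * Real.sqrt (v / (1 - v))) / (π * Real.sqrt (v / (1 - v)))) *
        (1 + ε N)) ∧
    Tendsto (fun N : ℕ => G N / (1 - v) ^ N) atTop
      (nhds (Real.sinh (π * Real.sqrt (v / (1 - v))) / (π * Real.sqrt (v / (1 - v))))) := by
  have h1v : (0:ℝ) < 1 - v := by linarith
  set x2 : ℝ := v / (1 - v) with hx2def
  have hx2 : 0 < x2 := div_pos hv0 h1v
  set s : ℝ := Real.sqrt x2 with hsdef
  have hs : 0 < s := Real.sqrt_pos.mpr hx2
  have hs2 : s ^ 2 = x2 := Real.sq_sqrt hx2.le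
  set L : ℝ := Real.sinh (π * s) / (π * s) with hLdef
  have hπs : 0 < π * s := mul_pos Real.pi_pos hs
  have hL : 0 < L := div_pos (Real.sinh_pos_iff.mpr hπs) hπs
  set P : ℕ → ℝ := fun N => ∏ j ∈ Finset.Ioc 0 N, (1 + x2 / (j:ℝ) ^ 2) with hPdef
  -- factor identity
  have hfac : ∀ j : ℕ, 1 ≤ j → 1 - v * α j = (1 - v) * (1 + x2 / (j:ℝ) ^ 2) := by
    intro j hj
    have hjne : ((j:ℝ)) ≠ 0 := Nat.cast_ne_zero.mpr (by omega)
    rw [hα j hj, hx2def]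
    field_simp
    ring
  have hGP : ∀ N, G N = (1 - v) ^ N * P N := by
    intro N
    rw [hG, hPdef]
    rw [show Finset.Icc 1 N = Finset.Ioc 0 N from rfl]
    rw [Finset.prod_congr rfl fun j hj => hfac j (Finset.mem_Ioc.mp hj).1,
      Finset.prod_mul_distrib, Finset.prod_const, Nat.card_Ioc, Nat.sub_zero]
  -- positivity and monotonicity of P
  have hfacpos : ∀ j : ℕ, (0:ℝ) < 1 + x2 / (j:ℝ) ^ 2 := by
    intro j
    have : 0 ≤ x2 / (j:ℝ) ^ 2 := div_nonneg hx2.le (by positivity)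
    linarith
  have hPpos : ∀ N, 0 < P N := fun N => Finset.prod_pos fun j _ => hfacpos j
  have hPmono : Monotone P := by
    apply monotone_nat_of_le_succ
    intro n
    have : P (n + 1) = P n * (1 + x2 / ((n + 1 : ℕ) : ℝ) ^ 2) := by
      rw [hPdef]
      rw [← Finset.prod_Ioc_succ_top (Nat.zero_le n)]
    rw [this]
    nlinarith [hPpos n, hfacpos (n + 1), div_nonneg hx2.le (sq_nonneg ((n+1:ℕ):ℝ))]
  -- limit of P
  have hPL : Tendsto P atTop (nhds L) := by
    have h := euler_sinh s hs
    apply h.congr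
    intro n
    simp only [hPdef]
    rw [show Finset.Ioc 0 n = Finset.Ico 1 (n+1) by rfl, Finset.prod_Ico_eq_prod_range]
    simp only [Nat.add_sub_cancel]
    apply Finset.prod_congr rfl
    intro j _
    rw [hs2]
    push_cast
    ring
  -- P N ≤ L
  have hPle : ∀ N, P N ≤ L := fun N => hPmono.ge_of_tendsto hPL N
  -- tail bound
  have htail : ∀ N : ℕ, 1 ≤ N → L ≤ P N * Real.exp (2 * x2 / N) := by
    intro N hN
    apply le_of_tendsto hPL
    filter_upwards [eventually_ge_atTop N] with M hM
    have hsplit : P N * ∏ j ∈ Finset.Ioc N M, (1 + x2 / (j:ℝ) ^ 2) = P M := by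
      rw [hPdef]
      exact Finset.prod_Ioc_consecutive _ (Nat.zero_le N) hM
    rw [← hsplit]
    apply mul_le_mul_of_nonneg_left _ (hPpos N).le
    calc ∏ j ∈ Finset.Ioc N M, (1 + x2 / (j:ℝ) ^ 2)
        ≤ ∏ j ∈ Finset.Ioc N M, Real.exp (x2 / (j:ℝ) ^ 2) := by
          apply Finset.prod_le_prod (fun j _ => (hfacpos j).le)
          intro j _
          have := Real.add_one_le_exp (x2 / (j:ℝ) ^ 2)
          linarith
      _ = Real.exp (∑ j ∈ Finset.Ioc N M, x2 / (j:ℝ) ^ 2) := (Real.exp_sum _ _).symm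
      _ ≤ Real.exp (2 * x2 / N) := by
          apply Real.exp_le_exp.mpr
          have hsum : ∑ j ∈ Finset.Ioc N M, x2 / (j:ℝ) ^ 2
              = x2 * ∑ j ∈ Finset.Ioc N M, ((j:ℝ) ^ 2)⁻¹ := by
            rw [Finset.mul_sum]
            exact Finset.sum_congr rfl fun j _ => by rw [div_eq_mul_inv]
          rw [hsum]
          have h2 : ∑ j ∈ Finset.Ioc N M, ((j:ℝ) ^ 2)⁻¹ ≤ 2 / (N + 1) := by
            have := sum_Ioo_inv_sq_le (α := ℝ) N (M + 1)
            rwa [show Finset.Ioo N (M+1) = Finset.Ioc N M by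
              rw [Finset.Ioo_add_one_right_eq_Ioc]] at this
          have hNpos : (0:ℝ) < N := by exact_mod_cast hN
          calc x2 * ∑ j ∈ Finset.Ioc N M, ((j:ℝ) ^ 2)⁻¹ ≤ x2 * (2 / (N + 1)) :=
                mul_le_mul_of_nonneg_left h2 hx2.le
            _ ≤ x2 * (2 / N) := by
                apply mul_le_mul_of_nonneg_left _ hx2.le
                apply div_le_div_of_nonneg_left (by norm_num) hNpos (by linarith)
            _ = 2 * x2 / N := by ring
  constructor
  · refine ⟨2 * x2, fun N => P N / L - 1, ?_, ?_⟩
    · intro N hN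
      have hNpos : (0:ℝ) < N := by exact_mod_cast hN
      have h1 : P N / L - 1 ≤ 0 := by
        rw [sub_nonpos, div_le_one hL]; exact hPle N
      have h2 : -(2 * x2 / N) ≤ P N / L - 1 := by
        have ht := htail N hN
        have hmul : Real.exp (-(2 * x2 / N)) * Real.exp (2 * x2 / N) = 1 := by
          rw [← Real.exp_add]; simp
        have hexp : Real.exp (-(2 * x2 / N)) ≤ P N / L := by
          rw [le_div_iff₀ hL]
          have h3 := mul_le_mul_of_nonneg_left ht (Real.exp_pos (-(2 * x2 / N))).le
          have h4 : Real.exp (-(2 * x2 / N)) * (P N * Real.exp (2 * x2 / N)) = P N := by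
            rw [show Real.exp (-(2 * x2 / (N:ℝ))) * (P N * Real.exp (2 * x2 / N))
              = P N * (Real.exp (-(2 * x2 / (N:ℝ))) * Real.exp (2 * x2 / N)) by ring, hmul, mul_one]
          linarith
        have := Real.add_one_le_exp (-(2 * x2 / N))
        linarith
      rw [abs_le]
      constructor
      · simpa using h2
      · have : (0:ℝ) ≤ 2 * x2 / N := by positivity
        linarith
    · intro N hN
      have : 1 + (P N / L - 1) = P N / L := by ring
      rw [hGP, this]
      field_simp [hL.ne']
  · have : (fun N : ℕ => G N / (1 - v) ^ N) = P := by
      funext N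
      rw [hGP]
      field_simp [pow_ne_zero N h1v.ne']
    rw [this]
    exact hPL
end

section
/- Let α_j ∈ 𝔻 for j ≥ 1 with ∑_{j=1}^∞ (1 - |α_j|) < ∞. Then for each z ∈ 𝔻 the infinite Blaschke product B(z) = ∏_{j=1}^∞ B_{α_j}(z) converges, and the partial products u_N(z) = ∏_{j=1}^N B_{α_j}(z) converge to B(z) for every z ∈ 𝔻. -/
open Filter Finset Complex

/-- The normalized Blaschke factor `B_α(z) = (-ᾱ/|α|)·(z-α)/(1-ᾱz)`,
with the convention `B_0(z) = z`. -/
noncomputable def blaschkeFactor (α z : ℂ) : ℂ :=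
  if α = 0 then z
  else (-(starRingEnd ℂ) α / ‖α‖) * ((z - α) / (1 - (starRingEnd ℂ) α * z))

/-- Key estimate: `‖B_α(z) - 1‖ ≤ (1 - ‖α‖)·(1+‖z‖)/(1-‖z‖)` on the disk. -/
lemma blaschkeFactor_sub_one_bound {α z : ℂ} (hα : ‖α‖ < 1) (hz : ‖z‖ < 1) :
    ‖blaschkeFactor α z - 1‖ ≤ (1 - ‖α‖) * ((1 + ‖z‖) / (1 - ‖z‖)) := by
  have hz1 : (0:ℝ) < 1 - ‖z‖ := by linarith
  by_cases h0 : α = 0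
  · simp only [blaschkeFactor, h0, if_pos, norm_zero, sub_zero, one_mul]
    calc ‖z - 1‖ ≤ ‖z‖ + 1 := by
          simpa using norm_sub_le z 1
      _ ≤ (1 + ‖z‖) / (1 - ‖z‖) := by
          rw [le_div_iff₀ hz1]; nlinarith [norm_nonneg z]
  · have hαn : (0:ℝ) < ‖α‖ := norm_pos_iff.mpr h0
    have hden : (1 : ℂ) - (starRingEnd ℂ) α * z ≠ 0 := by
      intro h
      have h1 : ‖(starRingEnd ℂ) α * z‖ < 1 := by
        rw [norm_mul, RCLike.norm_conj]
        nlinarith [norm_nonneg z, norm_nonneg α]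
      have h2 : (1 : ℂ) = (starRingEnd ℂ) α * z := by linear_combination h
      rw [← h2] at h1; simp at h1
    have hdnorm : 1 - ‖z‖ ≤ ‖(1 : ℂ) - (starRingEnd ℂ) α * z‖ := by
      have := norm_sub_norm_le (1 : ℂ) ((starRingEnd ℂ) α * z)
      have h1 : ‖(starRingEnd ℂ) α * z‖ ≤ ‖z‖ := by
        rw [norm_mul, RCLike.norm_conj]
        nlinarith [norm_nonneg z]
      simp only [norm_one] at this
      linarith
    have hr : ((‖α‖ : ℂ)) ≠ 0 := by
      simpa using hαn.ne'
    have hconj : (starRingEnd ℂ) α * α = ((‖α‖:ℂ))^2 := by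
      rw [mul_comm, Complex.mul_conj, Complex.normSq_eq_norm_sq]
      push_cast
      ring
    have key : blaschkeFactor α z - 1 =
        (((‖α‖:ℂ)) - 1) * ((starRingEnd ℂ) α * z + (‖α‖:ℂ)) /
          ((‖α‖:ℂ) * (1 - (starRingEnd ℂ) α * z)) := by
      rw [blaschkeFactor, if_neg h0, div_mul_div_comm, div_sub_one (mul_ne_zero hr hden),
        div_eq_div_iff (mul_ne_zero hr hden) (mul_ne_zero hr hden)]
      linear_combination ((‖α‖:ℂ) * (1 - (starRingEnd ℂ) α * z)) * hconj
    rw [key, norm_div, norm_mul, norm_mul]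
    have hnum1 : ‖((‖α‖:ℂ)) - 1‖ = 1 - ‖α‖ := by
      rw [← norm_neg]
      have : -(((‖α‖:ℂ)) - 1) = ((1 - ‖α‖ : ℝ) : ℂ) := by push_cast; ring
      rw [this, Complex.norm_real, Real.norm_of_nonneg (by linarith)]
    have hnum2 : ‖(starRingEnd ℂ) α * z + (‖α‖:ℂ)‖ ≤ ‖α‖ * (1 + ‖z‖) := by
      calc ‖(starRingEnd ℂ) α * z + (‖α‖:ℂ)‖ ≤ ‖(starRingEnd ℂ) α * z‖ + ‖((‖α‖:ℂ))‖ :=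
            norm_add_le _ _
        _ = ‖α‖ * ‖z‖ + ‖α‖ := by
            rw [norm_mul, RCLike.norm_conj, Complex.norm_real,
              Real.norm_of_nonneg (norm_nonneg _)]
        _ = ‖α‖ * (1 + ‖z‖) := by ring
    have hd2 : ‖((‖α‖:ℂ))‖ = ‖α‖ := by
      rw [Complex.norm_real, Real.norm_of_nonneg (norm_nonneg _)]
    have hm : (0:ℝ) < ‖(1:ℂ) - (starRingEnd ℂ) α * z‖ := norm_pos_iff.mpr hden
    rw [hnum1, hd2, div_le_iff₀ (mul_pos hαn hm)]
    calc (1 - ‖α‖) * ‖(starRingEnd ℂ) α * z + (‖α‖:ℂ)‖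
        ≤ (1 - ‖α‖) * (‖α‖ * (1 + ‖z‖)) :=
          mul_le_mul_of_nonneg_left hnum2 (by linarith)
      _ = (1 - ‖α‖) * ((1 + ‖z‖) / (1 - ‖z‖)) * (‖α‖ * (1 - ‖z‖)) := by
          have hc : (1 + ‖z‖) / (1 - ‖z‖) * (1 - ‖z‖) = 1 + ‖z‖ := div_mul_cancel₀ _ hz1.ne'
          linear_combination (-(1 - ‖α‖) * ‖α‖) * hc
      _ ≤ (1 - ‖α‖) * ((1 + ‖z‖) / (1 - ‖z‖)) * (‖α‖ * ‖(1:ℂ) - (starRingEnd ℂ) α * z‖) := by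
          have h1 : (0:ℝ) ≤ (1 - ‖α‖) * ((1 + ‖z‖) / (1 - ‖z‖)) :=
            mul_nonneg (by linarith) (div_nonneg (by positivity) hz1.le)
          exact mul_le_mul_of_nonneg_left
            (mul_le_mul_of_nonneg_left hdnorm (norm_nonneg _)) h1

/-- If `α_j ∈ 𝔻` satisfy the Blaschke condition `∑ (1 - |α_j|) < ∞`, then for each
`z ∈ 𝔻` the infinite Blaschke product `B(z) = ∏_{j=1}^∞ B_{α_j}(z)` converges, i.e. the
partial products `u_N(z) = ∏_{j=1}^N B_{α_j}(z)` converge to a limit `B(z)`. -/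
theorem stmt10 (α : ℕ → ℂ) (hα : ∀ j, ‖α j‖ < 1)
    (hsum : Summable (fun j => 1 - ‖α j‖)) :
    ∃ B : ℂ → ℂ, ∀ z : ℂ, ‖z‖ < 1 →
      Tendsto (fun N : ℕ => ∏ j ∈ Finset.range N, blaschkeFactor (α j) z)
        atTop (nhds (B z)) := by
  refine ⟨fun z => ∏' j, blaschkeFactor (α j) z, fun z hz => ?_⟩
  set f : ℕ → ℂ := fun j => blaschkeFactor (α j) z with hf
  suffices h : Multipliable f from h.hasProd.tendsto_prod_nat
  by_cases hzero : ∃ j, f j = 0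
  · obtain ⟨j₀, hj₀⟩ := hzero
    refine ⟨0, ?_⟩
    have : ∀ᶠ s : Finset ℕ in atTop, ∏ i ∈ s, f i = 0 := by
      filter_upwards [Filter.eventually_ge_atTop ({j₀} : Finset ℕ)] with s hs
      exact Finset.prod_eq_zero (hs (Finset.mem_singleton_self j₀)) hj₀
    exact Tendsto.congr' (this.mono fun s hs => hs.symm) tendsto_const_nhds
  · push_neg at hzero
    have hsub : Summable (fun j => ‖f j - 1‖) := by
      apply Summable.of_nonneg_of_le (fun j => norm_nonneg _)
        (fun j => blaschkeFactor_sub_one_bound (hα j) hz)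
      exact hsum.mul_right _
    have hlog : Summable (fun j => Complex.log (f j)) := by
      have hsmall : ∀ᶠ j in atTop, ‖f j - 1‖ ≤ 1/2 := by
        have := hsub.tendsto_atTop_zero
        filter_upwards [this.eventually_le_const (by norm_num : (0:ℝ) < 1/2)] with j hj
        exact hj
      apply Summable.of_norm_bounded_eventually_nat (g := fun j => (3/2) * ‖f j - 1‖)
        (hsub.mul_left _)
      filter_upwards [hsmall] with j hj
      simpa using Complex.norm_log_one_add_half_le_self hj
    exact Complex.multipliable_of_summable_log hlog
end
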